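/- For any integer n ≥ 0 with n ≥ 1 and any rational (or real) x, the binomial coefficient satisfies: C(x+n, n) = Σ_{i=1}^{n} (-1)^{i+1} · C(x+n, i) · C(x+n-i, n-i) · C(n, i) / C(2n-1, i), where C(y, k) denotes the generalized binomial coefficient y(y-1)···(y-k+1)/k!. -/

import Mathlib

/-- Generalized binomial coefficient `C(x, k) = x(x-1)⋯(x-k+1)/k!` for rational `x`. -/
noncomputable def gchoose (x : ℚ) (k : ℕ) : ℚ :=
  (∏ i ∈ Finset.range k, (x - i)) / (Nat.factorial k)

lemma gchoose_nat {m k : ℕ} (h : k ≤ m) : gchoose (m : ℚ) k = m.choose k := by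
  unfold gchoose
  have hp : ∏ i ∈ Finset.range k, ((m : ℚ) - i) = (m.descFactorial k : ℚ) := by
    rw [Nat.descFactorial_eq_prod_range, Nat.cast_prod]
    refine Finset.prod_congr rfl fun i hi => ?_
    rw [Finset.mem_range] at hi
    rw [Nat.cast_sub (le_of_lt (lt_of_lt_of_le hi h))]
  rw [hp, Nat.descFactorial_eq_factorial_mul_choose]
  push_cast
  rw [mul_comm]
  have : (k.factorial : ℚ) ≠ 0 := Nat.cast_ne_zero.mpr k.factorial_ne_zero
  field_simp

lemma gchoose_mul (x : ℚ) {i n : ℕ} (h : i ≤ n) :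
    gchoose x i * gchoose (x - i) (n - i) = gchoose x n * n.choose i := by
  unfold gchoose
  have hsplit : ∏ j ∈ Finset.range n, (x - j) =
      (∏ j ∈ Finset.range i, (x - j)) * ∏ j ∈ Finset.range (n - i), (x - i - j) := by
    have hpr := Finset.prod_range_add (fun j : ℕ => x - j) i (n - i)
    rw [show i + (n - i) = n by omega] at hpr
    rw [hpr]
    congr 1
    refine Finset.prod_congr rfl fun j _ => ?_
    push_cast
    ring
  rw [hsplit]
  have hfac : (n.choose i : ℚ) * i.factorial * (n - i).factorial = n.factorial := by
    exact_mod_cast congrArg (Nat.cast : ℕ → ℚ) (Nat.choose_mul_factorial_mul_factorial h)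
  have h1 : (i.factorial : ℚ) ≠ 0 := Nat.cast_ne_zero.mpr i.factorial_ne_zero
  have h2 : ((n - i).factorial : ℚ) ≠ 0 := Nat.cast_ne_zero.mpr (n - i).factorial_ne_zero
  have h3 : (n.factorial : ℚ) ≠ 0 := Nat.cast_ne_zero.mpr n.factorial_ne_zero
  field_simp
  linear_combination (-1 : ℚ) * (∏ j ∈ Finset.range i, (x - j)) * (∏ j ∈ Finset.range (n - i), (x - i - j)) * hfac

/-- chain identity for binomial coefficients -/
lemma chainC {n i : ℕ} (hn : 1 ≤ n) (hi : i ≤ n) :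
    n.choose i * (2 * n - 1).choose (n - 1) = (2 * n - 1).choose i * (2 * n - 1 - i).choose (n - 1) := by
  have h1 := Nat.choose_mul (n := 2 * n - 1) (show i ≤ n - 1 + i by omega)
  have h2 := Nat.choose_mul (n := 2 * n - 1) (show n - 1 ≤ n - 1 + i by omega)
  have h3 : (n - 1 + i).choose (n - 1) = (n - 1 + i).choose i := by
    have := Nat.choose_symm (show i ≤ n - 1 + i by omega)
    rwa [show n - 1 + i - i = n - 1 by omega] at this
  rw [show n - 1 + i - i = n - 1 by omega] at h1
  rw [show n - 1 + i - (n - 1) = i by omega, show 2 * n - 1 - (n - 1) = n by omega] at h2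
  rw [h3] at h2
  rw [mul_comm, ← h2, h1]

/-- core alternating-sum identity, raw form -/
lemma keyD (n : ℕ) (hn : 1 ≤ n) :
    ∑ m ∈ Finset.range (n + 1), (-1 : ℚ) ^ (m + n) * n.choose m * ((m + n - 1).choose m) = 0 := by
  classical
  have hpoly : ((Polynomial.X + 1 : Polynomial ℚ) - Polynomial.X) ^ n * (Polynomial.X + 1) ^ (n - 1)
      = (Polynomial.X + 1) ^ (n - 1) := by
    rw [show (Polynomial.X + 1 : Polynomial ℚ) - Polynomial.X = 1 by ring, one_pow, one_mul]
  rw [sub_pow] at hpoly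
  have hcoeff := congrArg (fun p => Polynomial.coeff p n) hpoly
  simp only [Finset.sum_mul, Polynomial.finset_sum_coeff] at hcoeff
  rw [Polynomial.coeff_X_add_one_pow, Nat.choose_eq_zero_of_lt (by omega), Nat.cast_zero] at hcoeff
  rw [← hcoeff]
  refine Finset.sum_congr rfl fun m hm => ?_
  rw [Finset.mem_range] at hm
  have hm' : m ≤ n := by omega
  have heq : (-1 : Polynomial ℚ) ^ (m + n) * (Polynomial.X + 1) ^ m * Polynomial.X ^ (n - m) *
      (n.choose m : Polynomial ℚ) * (Polynomial.X + 1) ^ (n - 1) =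
      Polynomial.C ((-1 : ℚ) ^ (m + n) * n.choose m) *
      (Polynomial.X ^ (n - m) * (Polynomial.X + 1) ^ (m + n - 1)) := by
    rw [show m + n - 1 = m + (n - 1) by omega, pow_add]
    rw [map_mul, map_pow, Polynomial.C_neg, Polynomial.C_1, Polynomial.C_eq_natCast]
    ring
  have hc : (Polynomial.X ^ (n - m) * (Polynomial.X + 1) ^ (m + n - 1) : Polynomial ℚ).coeff n
      = ((m + n - 1).choose m : ℚ) := by
    rw [Polynomial.coeff_X_pow_mul', if_pos (by omega), show n - (n - m) = m by omega,
      Polynomial.coeff_X_add_one_pow]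
  rw [heq, Polynomial.coeff_C_mul, hc]

/-- core alternating-sum identity, reflected form -/
lemma keyD' (n : ℕ) (hn : 1 ≤ n) :
    ∑ j ∈ Finset.range (n + 1), (-1 : ℚ) ^ j * n.choose j * ((2 * n - 1 - j).choose (n - 1)) = 0 := by
  have h := keyD n hn
  rw [← Finset.sum_range_reflect] at h
  rw [← h]
  refine Finset.sum_congr rfl fun j hj => ?_
  rw [Finset.mem_range] at hj
  have hj' : j ≤ n := by omega
  rw [show n + 1 - 1 - j = n - j by omega]
  have e1 : ((-1 : ℚ)) ^ (n - j + n) = (-1) ^ j := by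
    rw [show n - j + n = j + 2 * (n - j) by omega, pow_add, pow_mul]
    simp
  have e2 : n.choose (n - j) = n.choose j := Nat.choose_symm hj'
  have e3 : (n - j + n - 1).choose (n - j) = (2 * n - 1 - j).choose (n - 1) := by
    rw [show n - j + n - 1 = 2 * n - 1 - j by omega]
    have := Nat.choose_symm (show n - 1 ≤ 2 * n - 1 - j by omega)
    rwa [show 2 * n - 1 - j - (n - 1) = n - j by omega] at this
  rw [e1, e2, e3]

theorem stmt0 (n : ℕ) (hn : 1 ≤ n) (x : ℚ) :
    gchoose (x + n) n =
      ∑ i ∈ Finset.Icc 1 n, (-1 : ℚ) ^ (i + 1) * gchoose (x + n) i *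
        gchoose (x + n - i) (n - i) * gchoose (n : ℚ) i / gchoose (2 * (n : ℚ) - 1) i := by
  have hd : ((2 * n - 1).choose (n - 1) : ℚ) ≠ 0 := by
    exact_mod_cast (Nat.choose_pos (show n - 1 ≤ 2 * n - 1 by omega)).ne'
  have hD : ∑ i ∈ Finset.Icc 1 n, (-1 : ℚ) ^ (i + 1) * n.choose i * ((2 * n - 1 - i).choose (n - 1))
      = ((2 * n - 1).choose (n - 1) : ℚ) := by
    have h0 := keyD' n hn
    rw [Finset.sum_range_succ'] at h0
    simp only [pow_zero, one_mul, Nat.choose_zero_right, Nat.cast_one, Nat.sub_zero] at h0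
    have e : ∑ i ∈ Finset.Icc 1 n, (-1 : ℚ) ^ (i + 1) * n.choose i * ((2 * n - 1 - i).choose (n - 1))
        = ∑ j ∈ Finset.range n,
          -((-1 : ℚ) ^ (j + 1) * n.choose (j + 1) * ((2 * n - 1 - (j + 1)).choose (n - 1))) := by
      rw [← Finset.Ico_add_one_right_eq_Icc, Finset.sum_Ico_eq_sum_range]
      rw [show n + 1 - 1 = n from rfl]
      refine Finset.sum_congr rfl fun j _ => ?_
      rw [add_comm 1 j]
      ring
    rw [e, Finset.sum_neg_distrib]
    linarith [h0]
  have hterm : ∀ i ∈ Finset.Icc 1 n,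
      (-1 : ℚ) ^ (i + 1) * gchoose (x + n) i * gchoose (x + n - i) (n - i) * gchoose (n : ℚ) i /
        gchoose (2 * (n : ℚ) - 1) i =
      gchoose (x + n) n *
        ((-1 : ℚ) ^ (i + 1) * n.choose i * ((2 * n - 1 - i).choose (n - 1)) /
          ((2 * n - 1).choose (n - 1) : ℚ)) := by
    intro i hi
    rw [Finset.mem_Icc] at hi
    obtain ⟨hi1, hi2⟩ := hi
    have hmul := gchoose_mul (x + n) hi2
    have hni : gchoose (n : ℚ) i = n.choose i := gchoose_nat hi2
    have h2n : gchoose (2 * (n : ℚ) - 1) i = ((2 * n - 1).choose i : ℚ) := by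
      have hcast : (2 * (n : ℚ) - 1) = ((2 * n - 1 : ℕ) : ℚ) := by
        rw [Nat.cast_sub (show 1 ≤ 2 * n by omega)]
        push_cast
        ring
      rw [hcast, gchoose_nat (show i ≤ 2 * n - 1 by omega)]
    have hC : (n.choose i : ℚ) * ((2 * n - 1).choose (n - 1)) =
        ((2 * n - 1).choose i) * ((2 * n - 1 - i).choose (n - 1)) := by
      exact_mod_cast congrArg (Nat.cast : ℕ → ℚ) (chainC hn hi2)
    have hb : ((2 * n - 1).choose i : ℚ) ≠ 0 := by
      exact_mod_cast (Nat.choose_pos (show i ≤ 2 * n - 1 by omega)).ne'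
    rw [mul_assoc ((-1 : ℚ) ^ (i + 1)), hmul, hni, h2n, ← mul_div_assoc,
      div_eq_div_iff hb hd]
    linear_combination ((-1 : ℚ) ^ (i + 1)) * gchoose (x + n) n * (n.choose i : ℚ) * hC
  rw [Finset.sum_congr rfl hterm, ← Finset.mul_sum, ← Finset.sum_div, hD]
  field_simp
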